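/- Let d ≥ 1 and n ≥ 3. The supremum, over all injective families p : Fin n → EuclideanSpace ℝ (Fin d), of the minimum angle min { ∠(p i, p j, p k) : i, j, k pairwise distinct } equals π / 3 if and only if n ≤ d + 1. -/

import Mathlib

set_option maxHeartbeats 1000000
open Real EuclideanGeometry Filter Topology
open scoped RealInnerProductSpace

private lemma angle_eq_of_equilateral {d : ℕ} {a b c : EuclideanSpace ℝ (Fin d)} {r : ℝ}
    (hr : 0 < r) (h1 : dist a b = r) (h2 : dist b c = r) (h3 : dist a c = r) :
    ∠ a b c = π / 3 := by
  have law := EuclideanGeometry.law_cos a b c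
  rw [h1, h3, dist_comm c b, h2] at law
  have hcos : Real.cos (∠ a b c) = 1 / 2 := by nlinarith [mul_pos hr hr]
  have h1' : ∠ a b c ∈ Set.Icc 0 π := ⟨angle_nonneg _ _ _, angle_le_pi _ _ _⟩
  have h2' : π / 3 ∈ Set.Icc (0:ℝ) π := by constructor <;> nlinarith [pi_pos]
  exact Real.injOn_cos h1' h2' (by rw [hcos, Real.cos_pi_div_three])

private lemma dist_ge_of_angle_ge {d : ℕ} {a b c : EuclideanSpace ℝ (Fin d)} {θ : ℝ}
    (h0 : 0 ≤ θ) (hθ : θ ≤ ∠ a c b) : dist a c * Real.sin θ ≤ dist a b := by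
  have law := EuclideanGeometry.law_cos a c b
  have hcos : Real.cos (∠ a c b) ≤ Real.cos θ :=
    Real.cos_le_cos_of_nonneg_of_le_pi h0 (angle_le_pi _ _ _) hθ
  have hsc : Real.sin θ ^ 2 + Real.cos θ ^ 2 = 1 := Real.sin_sq_add_cos_sq θ
  have hsq : (dist a c * Real.sin θ)^2 ≤ (dist a b)^2 := by
    nlinarith [sq_nonneg (dist b c - dist a c * Real.cos θ), dist_nonneg (x := a) (y := c),
      dist_nonneg (x := b) (y := c),
      mul_nonneg (dist_nonneg (x := a) (y := c)) (dist_nonneg (x := b) (y := c)),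
      dist_comm a c, dist_comm b c]
  have hs : 0 ≤ Real.sin θ := by
    rcases le_or_gt θ π with h | h
    · exact Real.sin_nonneg_of_nonneg_of_le_pi h0 h
    · nlinarith [angle_le_pi a c b]
  exact (pow_le_pow_iff_left₀ (mul_nonneg dist_nonneg hs) dist_nonneg (by norm_num)).mp hsq

private lemma card_le_of_unit_half_inner {d m : ℕ} (w : Fin m → EuclideanSpace ℝ (Fin d))
    (hw : ∀ i, ‖w i‖ = 1) (hij : ∀ i j, i ≠ j → ⟪w i, w j⟫ = 1 / 2) : m ≤ d := by
  have hli : LinearIndependent ℝ w := by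
    rw [Fintype.linearIndependent_iff]
    intro g hg
    have key : ∀ j, g j = -(∑ i, g i) := by
      intro j
      have h0 : ⟪∑ i, g i • w i, w j⟫ = 0 := by rw [hg]; exact inner_zero_left _
      rw [sum_inner] at h0
      have : ∀ i, ⟪g i • w i, w j⟫ = g i * ⟪w i, w j⟫ := fun i => real_inner_smul_left _ _ _
      simp_rw [this] at h0
      have hsplit : ∑ i, g i * ⟪w i, w j⟫
          = g j * ⟪w j, w j⟫ + ∑ i ∈ Finset.univ.erase j, g i * ⟪w i, w j⟫ :=
        (Finset.add_sum_erase _ (fun i => g i * ⟪w i, w j⟫) (Finset.mem_univ j)).symm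
      have hjj : ⟪w j, w j⟫ = 1 := by
        rw [real_inner_self_eq_norm_sq, hw j]; norm_num
      have herase : ∑ i ∈ Finset.univ.erase j, g i * ⟪w i, w j⟫
          = ∑ i ∈ Finset.univ.erase j, g i * (1/2) := by
        refine Finset.sum_congr rfl fun i hi => ?_
        rw [hij i j (Finset.ne_of_mem_erase hi)]
      have hsum : ∑ i ∈ Finset.univ.erase j, g i = (∑ i, g i) - g j := by
        rw [← Finset.add_sum_erase _ _ (Finset.mem_univ j)]; ring
      rw [hsplit, hjj, herase, ← Finset.sum_mul, hsum] at h0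
      linarith
    have hS : (∑ i, g i) = 0 := by
      by_cases hm : m = 0
      · subst hm; simp
      have h1 : (∑ i, g i) = ∑ i : Fin m, -(∑ j, g j) := Finset.sum_congr rfl fun i _ => key i
      rw [Finset.sum_const, Finset.card_univ, Fintype.card_fin, nsmul_eq_mul] at h1
      have hm1 : 1 ≤ (m:ℝ) := by exact_mod_cast Nat.one_le_iff_ne_zero.mpr hm
      nlinarith [h1]
    intro i; rw [key i, hS, neg_zero]
  have := hli.fintype_card_le_finrank
  simpa [finrank_euclideanSpace_fin] using this

private lemma exists_equidistant (d n : ℕ) (hd : 1 ≤ d) (hnd : n ≤ d + 1) :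
    ∃ p : Fin n → EuclideanSpace ℝ (Fin d),
      ∀ i j, i ≠ j → dist (p i) (p j) = Real.sqrt 2 := by
  have hd0 : (0:ℝ) < d := by exact_mod_cast hd
  set s := Real.sqrt (d + 1) with hs
  have hs2 : s ^ 2 = (d:ℝ) + 1 := Real.sq_sqrt (by positivity)
  set t : ℝ := (1 + s) / d with ht
  have hteq : (d:ℝ) * t ^ 2 - 2 * t - 1 = 0 := by
    rw [ht]; field_simp; nlinarith [hs2]
  set f : Fin n → Fin d → ℝ :=
    fun i j => if (i:ℕ) = 0 then t else if (j:ℕ) + 1 = (i:ℕ) then 1 else 0 with hf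
  refine ⟨fun i => (WithLp.toLp 2 (f i) : EuclideanSpace ℝ (Fin d)), ?_⟩
  have hdist2 : ∀ a b : ℝ, dist a b ^ 2 = (a - b)^2 := fun a b => by
    rw [Real.dist_eq, sq_abs]
  have main : ∀ i i' : Fin n, i ≠ i' → (i:ℕ) ≠ 0 →
      (∑ j : Fin d, dist (f i j) (f i' j) ^ 2) = 2 := by
    intro i i' hne hi0
    have hi1 : 1 ≤ (i:ℕ) := Nat.one_le_iff_ne_zero.mpr hi0
    have hid : (i:ℕ) - 1 < d := by have := i.isLt; omega
    set a : Fin d := ⟨(i:ℕ) - 1, hid⟩ with ha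
    have haeq : ∀ j : Fin d, ((j:ℕ) + 1 = (i:ℕ)) ↔ j = a := by
      intro j; rw [Fin.ext_iff]; simp only [ha]; omega
    have h1 : ∀ j, f i j = if j = a then 1 else 0 := by
      intro j
      simp only [hf]; rw [if_neg hi0]; exact if_congr (haeq j) rfl rfl
    by_cases hi'0 : (i':ℕ) = 0
    · have h2 : ∀ j, f i' j = t := by intro j; simp only [hf]; rw [if_pos hi'0]
      have hpt : ∀ j : Fin d, dist (f i j) (f i' j) ^ 2
          = t^2 + (if j = a then 1 - 2*t else 0) := by
        intro j
        rw [hdist2, h1 j, h2 j]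
        by_cases hj : j = a
        · rw [if_pos hj, if_pos hj]; ring
        · rw [if_neg hj, if_neg hj]; ring
      rw [Finset.sum_congr rfl (fun j _ => hpt j), Finset.sum_add_distrib,
        Finset.sum_const, Finset.sum_ite_eq' Finset.univ a (fun _ => 1 - 2*t)]
      simp only [Finset.card_univ, Fintype.card_fin, nsmul_eq_mul, Finset.mem_univ, if_pos]
      nlinarith [hteq]
    · have hi'1 : 1 ≤ (i':ℕ) := Nat.one_le_iff_ne_zero.mpr hi'0
      have hi'd : (i':ℕ) - 1 < d := by have := i'.isLt; omega
      set b : Fin d := ⟨(i':ℕ) - 1, hi'd⟩ with hb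
      have hbeq : ∀ j : Fin d, ((j:ℕ) + 1 = (i':ℕ)) ↔ j = b := by
        intro j; rw [Fin.ext_iff]; simp only [hb]; omega
      have h2 : ∀ j, f i' j = if j = b then 1 else 0 := by
        intro j
        simp only [hf]; rw [if_neg hi'0]; exact if_congr (hbeq j) rfl rfl
      have hab : a ≠ b := by
        intro h
        apply hne
        rw [Fin.ext_iff] at h ⊢
        simp only [ha, hb] at h
        omega
      have hpt : ∀ j : Fin d, dist (f i j) (f i' j) ^ 2
          = (if j = a then 1 else 0) + (if j = b then 1 else 0) := by
        intro j
        rw [hdist2, h1 j, h2 j]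
        by_cases hja : j = a <;> by_cases hjb : j = b
        · exact absurd (hja.symm.trans hjb) hab
        · simp [hja, hjb, hab]
        · simp [hja, hjb, Ne.symm hab]
        · simp [hja, hjb]
      rw [Finset.sum_congr rfl (fun j _ => hpt j), Finset.sum_add_distrib,
        Finset.sum_ite_eq' Finset.univ a (fun _ => (1:ℝ)),
        Finset.sum_ite_eq' Finset.univ b (fun _ => (1:ℝ))]
      norm_num
  intro i i' hne
  have hsum : (∑ j : Fin d, dist (f i j) (f i' j) ^ 2) = 2 := by
    by_cases hi0 : (i:ℕ) = 0
    · have hi'0 : (i':ℕ) ≠ 0 := by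
        intro h; apply hne; rw [Fin.ext_iff]; omega
      have := main i' i (Ne.symm hne) hi'0
      rw [← this]
      exact Finset.sum_congr rfl fun j _ => by rw [dist_comm]
    · exact main i i' hne hi0
  rw [EuclideanSpace.dist_eq]
  rw [show (∑ j : Fin d, dist ((WithLp.toLp 2 (f i) : EuclideanSpace ℝ (Fin d)) j)
      ((WithLp.toLp 2 (f i') : EuclideanSpace ℝ (Fin d)) j) ^ 2) = 2 from hsum]

private lemma mem_le {d n : ℕ} (hn : 3 ≤ n) {p : Fin n → EuclideanSpace ℝ (Fin d)}
    (hinj : Function.Injective p) {α : ℝ}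
    (hl : IsLeast {θ : ℝ | ∃ i j k : Fin n, i ≠ j ∧ j ≠ k ∧ i ≠ k ∧
      θ = ∠ (p i) (p j) (p k)} α) :
    α ≤ π / 3 := by
  obtain ⟨hmem, hlb⟩ := hl
  have h0 : 0 < n := by omega
  have h1 : 1 < n := by omega
  have h2 : 2 < n := by omega
  set i0 : Fin n := ⟨0, h0⟩ with hi0
  set i1 : Fin n := ⟨1, h1⟩ with hi1
  set i2 : Fin n := ⟨2, h2⟩ with hi2
  have e0 : i0 ≠ i1 := by rw [hi0, hi1, Fin.ne_iff_vne]; norm_num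
  have e1 : i1 ≠ i2 := by rw [hi1, hi2, Fin.ne_iff_vne]; norm_num
  have e2 : i0 ≠ i2 := by rw [hi0, hi2, Fin.ne_iff_vne]; norm_num
  have hsum := EuclideanGeometry.angle_add_angle_add_angle_eq_pi
    (p₁ := p i0) (p₂ := p i1) (p i2) (hinj.ne e0.symm)
  have a1 := hlb ⟨i0, i1, i2, e0, e1, e2, rfl⟩
  have a2 := hlb ⟨i1, i2, i0, e1, e2.symm, e0.symm, rfl⟩
  have a3 := hlb ⟨i2, i0, i1, e2.symm, e0, e1.symm, rfl⟩
  linarith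

private lemma exists_normalized {d n : ℕ} (hn : 3 ≤ n) {ε : ℝ} (hε0 : 0 < ε) (hεle : ε ≤ π/12)
    {p : Fin n → EuclideanSpace ℝ (Fin d)} (hinj : Function.Injective p)
    (hang : ∀ i j k : Fin n, i ≠ j → j ≠ k → i ≠ k → π/3 - ε ≤ ∠ (p i) (p j) (p k)) :
    ∃ q : Fin n → EuclideanSpace ℝ (Fin d),
      (∀ i j k : Fin n, i ≠ j → j ≠ k → i ≠ k → π/3 - ε ≤ ∠ (q i) (q j) (q k)) ∧
      (∀ i j, i ≠ j → 1/2 ≤ dist (q i) (q j)) ∧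
      (∀ i, ‖q i‖ ≤ 2) := by
  have h0 : 0 < n := by omega
  have h1 : 1 < n := by omega
  set i0 : Fin n := ⟨0, h0⟩ with hi0
  set i1 : Fin n := ⟨1, h1⟩ with hi1
  have e0 : i0 ≠ i1 := by rw [hi0, hi1, Fin.ne_iff_vne]; norm_num
  set c : ℝ := dist (p i0) (p i1) with hc
  have hcpos : 0 < c := dist_pos.mpr (hinj.ne e0)
  set σ : ℝ := Real.sqrt 2 / 2 with hσdef
  have hsq2 : Real.sqrt 2 * Real.sqrt 2 = 2 := Real.mul_self_sqrt (by norm_num)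
  have hσ2 : σ * σ = 1/2 := by rw [hσdef, div_mul_div_comm, hsq2]; norm_num
  have hσpos : 0 < σ := by rw [hσdef]; positivity
  have hσ1 : σ ≤ 1 := by nlinarith [hσ2, hσpos]
  have hσ : ∀ a b c' : Fin n, a ≠ b → a ≠ c' → b ≠ c' →
      dist (p a) (p c') * σ ≤ dist (p a) (p b) := by
    intro a b c' hab hac hbc
    have hangle : π/4 ≤ ∠ (p a) (p c') (p b) := by
      have := hang a c' b hac (Ne.symm hbc) hab
      linarith [pi_pos]
    have h := dist_ge_of_angle_ge (θ := π/4) (by positivity) hangle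
    rwa [Real.sin_pi_div_four, ← hσdef] at h
  have ratio : ∀ i j k l : Fin n, i ≠ j → k ≠ l →
      dist (p k) (p l) * (1/2) ≤ dist (p i) (p j) := by
    intro i j k l hij hkl
    by_cases hik : i = k
    · subst hik
      by_cases hjl : j = l
      · subst hjl
        nlinarith [dist_nonneg (x := p i) (y := p j)]
      · have h := hσ i j l hij hkl hjl
        nlinarith [dist_nonneg (x := p i) (y := p l), hσpos]
    · by_cases hil : i = l
      · subst hil
        by_cases hjk : j = k
        · subst hjk
          rw [dist_comm (p j) (p i)]
          nlinarith [dist_nonneg (x := p i) (y := p j)]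
        · have h := hσ i j k hij (Ne.symm hkl) hjk
          rw [dist_comm (p k) (p i)]
          nlinarith [dist_nonneg (x := p i) (y := p k), hσpos]
      · by_cases hjk : j = k
        · subst hjk
          have h := hσ j i l (Ne.symm hij) hkl hil
          rw [dist_comm (p i) (p j)]
          nlinarith [dist_nonneg (x := p j) (y := p l), hσpos]
        · by_cases hjl : j = l
          · subst hjl
            have h := hσ j i k (Ne.symm hij) hjk hik
            rw [dist_comm (p k) (p j), dist_comm (p i) (p j)]
            nlinarith [dist_nonneg (x := p j) (y := p k), hσpos]
          · have ha := hσ i j k hij hik hjk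
            have hb := hσ k i l (Ne.symm hik) hkl hil
            rw [dist_comm (p k) (p i)] at hb
            nlinarith [hσpos, mul_le_mul_of_nonneg_left hb hσpos.le,
              dist_nonneg (x := p k) (y := p l)]
  set q : Fin n → EuclideanSpace ℝ (Fin d) := fun i => c⁻¹ • (p i - p i0) with hq
  have hqsub : ∀ i j, q i - q j = c⁻¹ • (p i - p j) := by
    intro i j
    simp only [hq]
    rw [← smul_sub]
    congr 1
    abel
  have hqang : ∀ i j k, ∠ (q i) (q j) (q k) = ∠ (p i) (p j) (p k) := by
    intro i j k
    show InnerProductGeometry.angle (q i -ᵥ q j) (q k -ᵥ q j)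
      = InnerProductGeometry.angle (p i -ᵥ p j) (p k -ᵥ p j)
    rw [vsub_eq_sub, vsub_eq_sub, vsub_eq_sub, vsub_eq_sub, hqsub, hqsub]
    exact InnerProductGeometry.angle_smul_smul (inv_ne_zero hcpos.ne') _ _
  have hqdist : ∀ i j, dist (q i) (q j) = c⁻¹ * dist (p i) (p j) := by
    intro i j
    simp only [hq]
    rw [dist_smul₀, dist_sub_right, Real.norm_eq_abs, abs_of_pos (inv_pos.mpr hcpos)]
  have hcinv : c⁻¹ * c = 1 := inv_mul_cancel₀ hcpos.ne'
  refine ⟨q, ?_, ?_, ?_⟩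
  · intro i j k hij hjk hik
    rw [hqang]
    exact hang i j k hij hjk hik
  · intro i j hij
    rw [hqdist]
    have hr := ratio i j i0 i1 hij e0
    rw [← hc] at hr
    nlinarith [mul_le_mul_of_nonneg_left hr (inv_pos.mpr hcpos).le]
  · intro i
    have hq0 : q i0 = 0 := by simp [hq]
    by_cases hii : i = i0
    · rw [hii, hq0]; norm_num
    · have : ‖q i‖ = dist (q i) (q i0) := by rw [hq0, dist_zero_right]
      rw [this, hqdist]
      have hr := ratio i0 i1 i i0 e0 hii
      rw [← hc] at hr
      nlinarith [mul_le_mul_of_nonneg_left hr (inv_pos.mpr hcpos).le,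
        dist_nonneg (x := p i) (y := p i0)]

private lemma tendsto_angle' {V P : Type*} [NormedAddCommGroup V] [InnerProductSpace ℝ V]
    [MetricSpace P] [NormedAddTorsor V P] {u v w : ℕ → P} {a b c : P}
    (ha : Tendsto u atTop (𝓝 a)) (hb : Tendsto v atTop (𝓝 b)) (hc : Tendsto w atTop (𝓝 c))
    (h1 : a ≠ b) (h2 : c ≠ b) :
    Tendsto (fun m => ∠ (u m) (v m) (w m)) atTop (𝓝 (∠ a b c)) := by
  have hcont := EuclideanGeometry.continuousAt_angle (x := (a, b, c)) h1 h2
  have h3 := hcont.tendsto.comp (ha.prodMk_nhds (hb.prodMk_nhds hc))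
  simpa [Function.comp_def] using h3

private lemma sup_ne {d n : ℕ} (hn : 3 ≤ n) (hdn : d + 2 ≤ n)
    (hsup : sSup {α : ℝ | ∃ p : Fin n → EuclideanSpace ℝ (Fin d), Function.Injective p ∧
      IsLeast {θ : ℝ | ∃ i j k : Fin n, i ≠ j ∧ j ≠ k ∧ i ≠ k ∧
        θ = ∠ (p i) (p j) (p k)} α} = π / 3) : False := by
  set S := {α : ℝ | ∃ p : Fin n → EuclideanSpace ℝ (Fin d), Function.Injective p ∧
      IsLeast {θ : ℝ | ∃ i j k : Fin n, i ≠ j ∧ j ≠ k ∧ i ≠ k ∧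
        θ = ∠ (p i) (p j) (p k)} α} with hSdef
  have hne : S.Nonempty := by
    by_contra h
    rw [Set.not_nonempty_iff_eq_empty] at h
    rw [h, Real.sSup_empty] at hsup
    linarith [pi_pos]
  have hex : ∀ m : ℕ, ∃ q : Fin n → EuclideanSpace ℝ (Fin d),
      (∀ i j k : Fin n, i ≠ j → j ≠ k → i ≠ k →
        π/3 - (π/12) * (1/((m:ℝ)+1)) ≤ ∠ (q i) (q j) (q k)) ∧
      (∀ i j, i ≠ j → 1/2 ≤ dist (q i) (q j)) ∧
      (∀ i, ‖q i‖ ≤ 2) := by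
    intro m
    set ε : ℝ := (π/12) * (1/((m:ℝ)+1)) with hεdef
    have hm0 : (0:ℝ) ≤ (m:ℝ) := Nat.cast_nonneg m
    have hε0 : 0 < ε := by rw [hεdef]; positivity
    have hεle : ε ≤ π/12 := by
      rw [hεdef]
      have h1 : 1/((m:ℝ)+1) ≤ 1 := by
        rw [div_le_one (by positivity)]; linarith
      nlinarith [pi_pos]
    have hlt : π/3 - ε < sSup S := by rw [hsup]; linarith
    obtain ⟨α, hαS, hαgt⟩ := exists_lt_of_lt_csSup hne hlt
    obtain ⟨p, hinj, hl⟩ := hαS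
    have hang : ∀ i j k : Fin n, i ≠ j → j ≠ k → i ≠ k →
        π/3 - ε ≤ ∠ (p i) (p j) (p k) := by
      intro i j k h1 h2 h3
      exact le_trans hαgt.le (hl.2 ⟨i, j, k, h1, h2, h3, rfl⟩)
    exact exists_normalized hn hε0 hεle hinj hang
  choose q hq1 hq2 hq3 using hex
  have hK : IsCompact (Set.univ.pi fun _ : Fin n =>
      Metric.closedBall (0 : EuclideanSpace ℝ (Fin d)) 2) :=
    isCompact_univ_pi fun _ => isCompact_closedBall _ _
  have hmemK : ∀ m, q m ∈ Set.univ.pi fun _ : Fin n =>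
      Metric.closedBall (0 : EuclideanSpace ℝ (Fin d)) 2 := by
    intro m
    rw [Set.mem_univ_pi]
    intro i
    rw [Metric.mem_closedBall, dist_zero_right]
    exact hq3 m i
  obtain ⟨x, -, φ, hφ, hconv⟩ := hK.tendsto_subseq hmemK
  have hcoord : ∀ i, Tendsto (fun m => q (φ m) i) atTop (𝓝 (x i)) :=
    fun i => (tendsto_pi_nhds.mp hconv) i
  have hxd : ∀ i j, i ≠ j → 1/2 ≤ dist (x i) (x j) := by
    intro i j hij
    have ht : Tendsto (fun m => dist (q (φ m) i) (q (φ m) j)) atTop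
        (𝓝 (dist (x i) (x j))) := (hcoord i).dist (hcoord j)
    exact ge_of_tendsto ht (Eventually.of_forall fun m => hq2 (φ m) i j hij)
  have hxne : ∀ i j, i ≠ j → x i ≠ x j := by
    intro i j hij h
    have := hxd i j hij
    rw [h, dist_self] at this; linarith
  have hεto : Tendsto (fun m : ℕ => π/3 - (π/12) * (1/((m:ℝ)+1))) atTop (𝓝 (π/3)) := by
    have h1 := tendsto_one_div_add_atTop_nhds_zero_nat (𝕜 := ℝ)
    have h2 := h1.const_mul (π/12)
    have h3 := h2.const_sub (π/3)
    simpa using h3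
  have hxang : ∀ i j k : Fin n, i ≠ j → j ≠ k → i ≠ k →
      π/3 ≤ ∠ (x i) (x j) (x k) := by
    intro i j k h1 h2 h3
    have hangt := tendsto_angle' (hcoord i) (hcoord j) (hcoord k)
      (hxne i j h1) (hxne k j (Ne.symm h2))
    refine le_of_tendsto_of_tendsto hεto hangt (Eventually.of_forall fun m => ?_)
    have hb := hq1 (φ m) i j k h1 h2 h3
    have hφm : (m:ℝ) ≤ (φ m : ℝ) := by exact_mod_cast hφ.le_apply
    have hmono : (π/12) * (1/((φ m:ℝ)+1)) ≤ (π/12) * (1/((m:ℝ)+1)) := by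
      have hd1 : (0:ℝ) < (m:ℝ)+1 := by positivity
      have := one_div_le_one_div_of_le hd1 (by linarith : (m:ℝ)+1 ≤ (φ m:ℝ)+1)
      nlinarith [pi_pos]
    linarith
  have h0 : 0 < n := by omega
  set i0 : Fin n := ⟨0, h0⟩ with hi0
  have hvertex : ∀ a b : Fin n, a ≠ i0 → b ≠ i0 → a ≠ b →
      ∠ (x a) (x i0) (x b) = π/3 := by
    intro a b ha hb hab
    have hsum := EuclideanGeometry.angle_add_angle_add_angle_eq_pi
      (p₁ := x a) (p₂ := x i0) (x b)
      (hxne i0 a (Ne.symm ha))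
    have ha1 := hxang a i0 b ha (Ne.symm hb) hab
    have ha2 := hxang i0 b a (Ne.symm hb) (Ne.symm hab) (Ne.symm ha)
    have ha3 := hxang b a i0 (Ne.symm hab) ha hb
    linarith
  have hn1 : ∀ i : Fin (n-1), (i:ℕ) + 1 < n := fun i => by have := i.isLt; omega
  set v : Fin (n-1) → EuclideanSpace ℝ (Fin d) :=
    fun i => x ⟨(i:ℕ)+1, hn1 i⟩ - x i0 with hvdef
  have hidx0 : ∀ i : Fin (n-1), (⟨(i:ℕ)+1, hn1 i⟩ : Fin n) ≠ i0 := by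
    intro i
    rw [hi0, Fin.ne_iff_vne]
    simp
  have hvne : ∀ i, v i ≠ 0 := by
    intro i
    rw [hvdef]
    simp only
    rw [sub_ne_zero]
    exact hxne _ i0 (hidx0 i)
  set w : Fin (n-1) → EuclideanSpace ℝ (Fin d) := fun i => ‖v i‖⁻¹ • v i with hwdef
  have hwnorm : ∀ i, ‖w i‖ = 1 := fun i => norm_smul_inv_norm (hvne i)
  have hwin : ∀ i j, i ≠ j → ⟪w i, w j⟫ = 1/2 := by
    intro i j hij
    have hidx2 : (⟨(i:ℕ)+1, hn1 i⟩ : Fin n) ≠ ⟨(j:ℕ)+1, hn1 j⟩ := by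
      rw [Fin.ne_iff_vne]
      simp only
      intro h
      exact hij (Fin.ext (by omega))
    have hangv := hvertex _ _ (hidx0 i) (hidx0 j) hidx2
    have hcos : Real.cos (∠ (x ⟨(i:ℕ)+1, hn1 i⟩) (x i0) (x ⟨(j:ℕ)+1, hn1 j⟩))
        = ⟪v i, v j⟫ / (‖v i‖ * ‖v j‖) := by
      show Real.cos (InnerProductGeometry.angle _ _) = _
      rw [InnerProductGeometry.cos_angle]
      simp only [vsub_eq_sub]; rfl
    rw [hangv, Real.cos_pi_div_three] at hcos
    have hni : ‖v i‖ ≠ 0 := norm_ne_zero_iff.mpr (hvne i)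
    have hnj : ‖v j‖ ≠ 0 := norm_ne_zero_iff.mpr (hvne j)
    rw [hwdef]
    simp only
    rw [real_inner_smul_left, real_inner_smul_right]
    field_simp at hcos ⊢
    linarith [hcos]
  have hcard := card_le_of_unit_half_inner w hwnorm hwin
  omega

theorem maximin_angle_eq_pi_div_three_iff (d n : ℕ) (hd : 1 ≤ d) (hn : 3 ≤ n) :
    sSup {α : ℝ | ∃ p : Fin n → EuclideanSpace ℝ (Fin d), Function.Injective p ∧
      IsLeast {θ : ℝ | ∃ i j k : Fin n, i ≠ j ∧ j ≠ k ∧ i ≠ k ∧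
        θ = ∠ (p i) (p j) (p k)} α} = π / 3 ↔ n ≤ d + 1 := by
  constructor
  · intro hsup
    by_contra hcon
    push_neg at hcon
    exact sup_ne hn (by omega) hsup
  · intro hnd
    obtain ⟨p, hp⟩ := exists_equidistant d n hd hnd
    have hr : (0:ℝ) < Real.sqrt 2 := Real.sqrt_pos.mpr (by norm_num)
    have hinj : Function.Injective p := by
      intro i j h
      by_contra hne
      have := hp i j hne
      rw [h, dist_self] at this
      linarith
    have h0 : 0 < n := by omega
    have h1 : 1 < n := by omega
    have h2 : 2 < n := by omega
    set i0 : Fin n := ⟨0, h0⟩ with hi0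
    set i1 : Fin n := ⟨1, h1⟩ with hi1
    set i2 : Fin n := ⟨2, h2⟩ with hi2
    have e0 : i0 ≠ i1 := by rw [hi0, hi1, Fin.ne_iff_vne]; norm_num
    have e1 : i1 ≠ i2 := by rw [hi1, hi2, Fin.ne_iff_vne]; norm_num
    have e2 : i0 ≠ i2 := by rw [hi0, hi2, Fin.ne_iff_vne]; norm_num
    have hl : IsLeast {θ : ℝ | ∃ i j k : Fin n, i ≠ j ∧ j ≠ k ∧ i ≠ k ∧
        θ = ∠ (p i) (p j) (p k)} (π/3) := by
      constructor
      · exact ⟨i0, i1, i2, e0, e1, e2,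
          (angle_eq_of_equilateral hr (hp i0 i1 e0) (hp i1 i2 e1) (hp i0 i2 e2)).symm⟩
      · rintro θ ⟨i, j, k, hij, hjk, hik, rfl⟩
        rw [angle_eq_of_equilateral hr (hp i j hij) (hp j k hjk) (hp i k hik)]
    have hmem : (π/3) ∈ {α : ℝ | ∃ p : Fin n → EuclideanSpace ℝ (Fin d),
        Function.Injective p ∧
        IsLeast {θ : ℝ | ∃ i j k : Fin n, i ≠ j ∧ j ≠ k ∧ i ≠ k ∧
          θ = ∠ (p i) (p j) (p k)} α} := ⟨p, hinj, hl⟩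
    have hub : ∀ α ∈ {α : ℝ | ∃ p : Fin n → EuclideanSpace ℝ (Fin d),
        Function.Injective p ∧
        IsLeast {θ : ℝ | ∃ i j k : Fin n, i ≠ j ∧ j ≠ k ∧ i ≠ k ∧
          θ = ∠ (p i) (p j) (p k)} α}, α ≤ π/3 := by
      rintro α ⟨p', hinj', hl'⟩
      exact mem_le hn hinj' hl'
    exact le_antisymm (csSup_le ⟨π/3, hmem⟩ hub) (le_csSup ⟨π/3, hub⟩ hmem)
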